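/- arXiv:2302.03761 — 3 statements merged into one kernel-verified Lean document; each statement's English description precedes it below -/
import Mathlib

section
/- Let n < r be positive integers and v₁,…,v_r ∈ ℤⁿ with v_i = e_i (the i-th standard basis vector) for 1 ≤ i ≤ n and v₁+⋯+v_r = 0. Let a = (a₁,…,a_r) ∈ ℤ^r with a_j = 0 for 1 ≤ j ≤ n, and set P(a) = {u ∈ ℝⁿ : ⟨u,v_j⟩ ≥ −a_j for all j} (a compact subset of the nonnegative orthant). For 1 ≤ i ≤ n define a⁽ⁱ⁾ ∈ ℤ^r by a⁽ⁱ⁾_j = a_j + (v_j)_i for j > n and a⁽ⁱ⁾_j = 0 for j ≤ n, where (v_j)_i is the i-th coordinate of v_j; note |a⁽ⁱ⁾| = |a| − 1. Then, as an identity in ℚ(q)[x₁,…,xₙ], (d/dx_i)_q RS_a(x;q) = [|a|]_q · RS_{a⁽ⁱ⁾}(x;q). -/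
noncomputable section
open MvPolynomial

/-- `(q;q)_d = ∏_{k=1}^d (1 - q^k)` in `ℚ(q)`. -/
def qqPoch (q : RatFunc ℚ) (d : ℕ) : RatFunc ℚ :=
  ∏ k ∈ Finset.range d, (1 - q ^ (k + 1))

/-- The substitution operator `T_{i,q} : f(x₁,…,x_i,…,xₙ) ↦ f(x₁,…,q·x_i,…,xₙ)`. -/
def Tq {n : ℕ} (i : Fin n) (f : MvPolynomial (Fin n) (RatFunc ℚ)) :
    MvPolynomial (Fin n) (RatFunc ℚ) :=
  aeval (fun j : Fin n => if j = i then C RatFunc.X * X j else X j) f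

/-- The `i`-th Jackson (partial `q`-)derivative `(d/dx_i)_q f = (f − T_{i,q} f)/((1−q)x_i)`;
the numerator `f − T_{i,q} f` is exactly divisible by the monomial `x_i`. -/
def jackson {n : ℕ} (i : Fin n) (f : MvPolynomial (Fin n) (RatFunc ℚ)) :
    MvPolynomial (Fin n) (RatFunc ℚ) :=
  C (1 - RatFunc.X : RatFunc ℚ)⁻¹ * ((f - Tq i f).divMonomial (Finsupp.single i 1))

/-- The generalized Rogers–Szegő polynomial
`RS_a(x;q) = Σ_{u ∈ P(a)∩ℤⁿ} [|a|; ⟨u,v₁⟩+a₁,…,⟨u,v_r⟩+a_r]_q x₁^{u₁}⋯xₙ^{uₙ}`,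
where `P(a) = {u ∈ ℝⁿ : ⟨u,v_i⟩ ≥ −a_i for all i}` lies in the nonnegative orthant
(so its lattice points are indexed by `u : Fin n → ℕ`); the sum is a finite sum
(`∑ᶠ`, a finitely supported sum), equal to `0` if `P(a)∩ℤⁿ = ∅`. -/
def RSgen (n r : ℕ) (v : Fin r → Fin n → ℤ) (a : Fin r → ℤ) :
    MvPolynomial (Fin n) (RatFunc ℚ) :=
  ∑ᶠ u : Fin n → ℕ,
    if ∀ i, -(a i) ≤ ∑ j, (u j : ℤ) * v i j then
      monomial (Finsupp.equivFunOnFinite.symm u)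
        (qqPoch RatFunc.X (∑ i, a i).toNat /
          ∏ i, qqPoch RatFunc.X ((∑ j, (u j : ℤ) * v i j) + a i).toNat)
    else 0

lemma one_sub_X_pow_ne (k : ℕ) : (1 - RatFunc.X ^ (k+1) : RatFunc ℚ) ≠ 0 := by
  have h1 : (1 - RatFunc.X ^ (k+1) : RatFunc ℚ)
      = algebraMap (Polynomial ℚ) (RatFunc ℚ) (1 - Polynomial.X ^ (k+1)) := by
    rw [map_sub, map_one, map_pow, RatFunc.algebraMap_X]
  rw [h1]
  apply RatFunc.algebraMap_ne_zero
  intro h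
  have h2 : (Polynomial.X : Polynomial ℚ) ^ (k+1) = 1 := by linear_combination -h
  have := congrArg Polynomial.natDegree h2
  rw [Polynomial.natDegree_X_pow, Polynomial.natDegree_one] at this
  omega

lemma qqPoch_ne_zero (d : ℕ) : qqPoch RatFunc.X d ≠ 0 := by
  unfold qqPoch
  exact Finset.prod_ne_zero_iff.mpr fun k _ => one_sub_X_pow_ne k

lemma qqPoch_succ (d : ℕ) : qqPoch RatFunc.X (d+1) = qqPoch RatFunc.X d * (1 - RatFunc.X ^ (d+1)) :=
  Finset.prod_range_succ _ d

lemma Tq_monomial {n : ℕ} (i : Fin n) (d : Fin n →₀ ℕ) (c : RatFunc ℚ) :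
    Tq i (monomial d c) = monomial d (RatFunc.X ^ (d i) * c) := by
  rw [Tq, aeval_monomial]
  have hprod : (d.prod fun j k => (if j = i then C RatFunc.X * X j else X j : MvPolynomial (Fin n) (RatFunc ℚ)) ^ k)
      = C (RatFunc.X ^ (d i)) * monomial d 1 := by
    rw [Finsupp.prod_fintype _ _ (fun j => pow_zero _)]
    have : ∀ j : Fin n, (if j = i then C RatFunc.X * X j else X j : MvPolynomial (Fin n) (RatFunc ℚ)) ^ d j
        = (if j = i then C RatFunc.X else 1) ^ d j * X j ^ d j := by
      intro j
      split
      · rw [mul_pow]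
      · rw [one_pow, one_mul]
    rw [Finset.prod_congr rfl fun j _ => this j, Finset.prod_mul_distrib]
    congr 1
    · rw [Finset.prod_eq_single i (fun j _ hj => by rw [if_neg hj, one_pow]) (by simp)]
      rw [if_pos rfl, ← C_pow]
    · rw [← prod_X_pow_eq_monomial]
      exact (Finset.prod_subset (Finset.subset_univ d.support) (by
        intro j _ hj
        simp [Finsupp.notMem_support_iff.mp hj])).symm
  rw [hprod, algebraMap_eq, ← mul_assoc, ← C_mul, C_mul_monomial, mul_one, mul_comm]

lemma coeff_Tq {n : ℕ} (i : Fin n) (f : MvPolynomial (Fin n) (RatFunc ℚ)) (d : Fin n →₀ ℕ) :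
    coeff d (Tq i f) = RatFunc.X ^ (d i) * coeff d f := by
  induction f using MvPolynomial.induction_on' with
  | monomial e c =>
    rw [Tq_monomial, coeff_monomial, coeff_monomial]
    split
    · subst ‹e = d›; rfl
    · ring
  | add p q hp hq =>
    rw [Tq, map_add, ← Tq, ← Tq, coeff_add, coeff_add, hp, hq]
    ring

lemma coeff_jackson {n : ℕ} (i : Fin n) (f : MvPolynomial (Fin n) (RatFunc ℚ)) (d : Fin n →₀ ℕ) :
    coeff d (jackson i f) =
      (1 - RatFunc.X : RatFunc ℚ)⁻¹ * (1 - RatFunc.X ^ (d i + 1)) * coeff (Finsupp.single i 1 + d) f := by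
  rw [jackson, coeff_C_mul, coeff_divMonomial, coeff_sub, coeff_Tq]
  have h1 : ((Finsupp.single i 1 + d : Fin n →₀ ℕ)) i = d i + 1 := by
    rw [Finsupp.add_apply, Finsupp.single_eq_same]; omega
  rw [h1]
  ring

section helpers
variable {n r : ℕ} {v : Fin r → Fin n → ℤ}

lemma dot_lt (hv : ∀ i : Fin r, (i : ℕ) < n → ∀ j : Fin n, v i j = if (j : ℕ) = (i : ℕ) then 1 else 0)
    (u : Fin n → ℕ) (j : Fin r) (hj : (j : ℕ) < n) :
    ∑ k, (u k : ℤ) * v j k = u ⟨(j : ℕ), hj⟩ := by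
  have h1 : ∀ k : Fin n, (u k : ℤ) * v j k = if k = ⟨(j : ℕ), hj⟩ then (u k : ℤ) else 0 := by
    intro k
    rw [hv j hj k]
    by_cases h : k = ⟨(j : ℕ), hj⟩
    · rw [if_pos h, if_pos (by simpa [Fin.ext_iff] using h), mul_one]
    · rw [if_neg h, if_neg (by simpa [Fin.ext_iff] using h), mul_zero]
  rw [Finset.sum_congr rfl fun k _ => h1 k, Finset.sum_ite_eq' Finset.univ,
    if_pos (Finset.mem_univ _)]

lemma dot_sum (hsym : ∀ j, ∑ i, v i j = 0) (u : Fin n → ℕ) :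
    ∑ j : Fin r, ∑ k, (u k : ℤ) * v j k = 0 := by
  rw [Finset.sum_comm]
  refine Finset.sum_eq_zero fun k _ => ?_
  rw [← Finset.mul_sum, hsym, mul_zero]

lemma dot_bound (hnr : n < r)
    (hv : ∀ i : Fin r, (i : ℕ) < n → ∀ j : Fin n, v i j = if (j : ℕ) = (i : ℕ) then 1 else 0)
    (hsym : ∀ j, ∑ i, v i j = 0)
    {a : Fin r → ℤ} (ha : ∀ i : Fin r, (i : ℕ) < n → a i = 0)
    {u : Fin n → ℕ} (hu : ∀ j, -(a j) ≤ ∑ k, (u k : ℤ) * v j k) (k : Fin n) :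
    (u k : ℤ) ≤ ∑ j, a j := by
  set t : Fin r → ℤ := fun j => (∑ m, (u m : ℤ) * v j m) + a j with ht
  have ht0 : ∀ j, 0 ≤ t j := fun j => by have := hu j; simp only [ht]; linarith
  have htsum : ∑ j, t j = ∑ j, a j := by
    simp only [ht]
    rw [Finset.sum_add_distrib, dot_sum hsym, zero_add]
  have hkr : (k : ℕ) < r := lt_trans k.2 hnr
  have hk : t ⟨(k : ℕ), hkr⟩ = u k := by
    simp only [ht]
    rw [dot_lt hv, ha _ k.2, add_zero]
  calc (u k : ℤ) = t ⟨(k : ℕ), hkr⟩ := hk.symm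
    _ ≤ ∑ j, t j := Finset.single_le_sum (fun j _ => ht0 j) (Finset.mem_univ _)
    _ = ∑ j, a j := htsum

lemma RS_fin (hnr : n < r)
    (hv : ∀ i : Fin r, (i : ℕ) < n → ∀ j : Fin n, v i j = if (j : ℕ) = (i : ℕ) then 1 else 0)
    (hsym : ∀ j, ∑ i, v i j = 0)
    {a : Fin r → ℤ} (ha : ∀ i : Fin r, (i : ℕ) < n → a i = 0)
    (c : (Fin n → ℕ) → RatFunc ℚ) :
    (Function.support fun u : Fin n → ℕ =>
      if ∀ i, -(a i) ≤ ∑ j, (u j : ℤ) * v i j then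
        monomial (Finsupp.equivFunOnFinite.symm u) (c u)
      else 0).Finite := by
  apply Set.Finite.subset (Set.finite_Icc (0 : Fin n → ℕ) (fun _ => (∑ j, a j).toNat))
  intro u hu
  have hcond : ∀ i, -(a i) ≤ ∑ j, (u j : ℤ) * v i j := by
    by_contra h
    exact hu (if_neg h)
  constructor
  · intro k; exact Nat.zero_le _
  · intro k
    have := dot_bound hnr hv hsym ha hcond k
    show u k ≤ (∑ j, a j).toNat
    omega

lemma coeff_RSgen (hnr : n < r)
    (hv : ∀ i : Fin r, (i : ℕ) < n → ∀ j : Fin n, v i j = if (j : ℕ) = (i : ℕ) then 1 else 0)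
    (hsym : ∀ j, ∑ i, v i j = 0)
    {a : Fin r → ℤ} (ha : ∀ i : Fin r, (i : ℕ) < n → a i = 0) (d : Fin n →₀ ℕ) :
    coeff d (RSgen n r v a) =
      if ∀ i, -(a i) ≤ ∑ j, ((d j : ℤ)) * v i j then
        qqPoch RatFunc.X (∑ i, a i).toNat /
          ∏ i, qqPoch RatFunc.X ((∑ j, ((d j : ℤ)) * v i j) + a i).toNat
      else 0 := by
  rw [RSgen]
  rw [show coeff d = ⇑(coeffAddMonoidHom (R := RatFunc ℚ) d) from rfl]
  rw [AddMonoidHom.map_finsum _ (RS_fin hnr hv hsym ha _)]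
  have key : ∀ u : Fin n → ℕ, u ≠ ⇑d →
      (coeffAddMonoidHom (R := RatFunc ℚ) d)
        (if ∀ i, -(a i) ≤ ∑ j, (u j : ℤ) * v i j then
          monomial (Finsupp.equivFunOnFinite.symm u)
            (qqPoch RatFunc.X (∑ i, a i).toNat /
              ∏ i, qqPoch RatFunc.X ((∑ j, (u j : ℤ) * v i j) + a i).toNat)
        else 0) = 0 := by
    intro u hu
    split
    · show coeff d (monomial _ _) = 0
      rw [coeff_monomial, if_neg]
      intro h
      apply hu
      have := congrArg (⇑Finsupp.equivFunOnFinite) h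
      rwa [Equiv.apply_symm_apply] at this
    · exact map_zero _
  rw [finsum_eq_single _ (⇑d) key]
  show coeff d _ = _
  have hsd : Finsupp.equivFunOnFinite.symm ⇑d = d := Finsupp.equivFunOnFinite_symm_coe d
  split
  · rw [hsd, coeff_monomial, if_pos rfl]
  · rfl

end helpers

end

/-- Let `n < r`, `v_i = e_i` for `1 ≤ i ≤ n`, `v₁+⋯+v_r = 0`, and
`a ∈ ℤ^r` with `a_j = 0` for `j ≤ n`.  With `a⁽ⁱ⁾_j = a_j + (v_j)_i` for `j > n` and
`a⁽ⁱ⁾_j = 0` for `j ≤ n`, one has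
`(d/dx_i)_q RS_a(x;q) = [|a|]_q · RS_{a⁽ⁱ⁾}(x;q)` in `ℚ(q)[x₁,…,xₙ]`. -/
theorem stmt5 (n r : ℕ) (hn : 0 < n) (hnr : n < r) (v : Fin r → Fin n → ℤ)
    (hv : ∀ i : Fin r, (i : ℕ) < n → ∀ j : Fin n, v i j = if (j : ℕ) = (i : ℕ) then 1 else 0)
    (hsym : ∀ j, ∑ i, v i j = 0)
    (a : Fin r → ℤ) (ha : ∀ i : Fin r, (i : ℕ) < n → a i = 0) (i : Fin n) :
    jackson i (RSgen n r v a) =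
      MvPolynomial.C ((1 - RatFunc.X ^ (∑ i, a i)) / (1 - RatFunc.X) : RatFunc ℚ) *
        RSgen n r v (fun jj => if (jj : ℕ) < n then 0 else a jj + v jj i) := by

  have ha' : ∀ j : Fin r, (j : ℕ) < n →
      (if (j : ℕ) < n then (0 : ℤ) else a j + v j i) = 0 := fun j hj => if_pos hj
  apply MvPolynomial.ext
  intro d
  rw [coeff_jackson, MvPolynomial.coeff_C_mul,
    coeff_RSgen hnr hv hsym ha, coeff_RSgen hnr hv hsym ha']
  beta_reduce
  have hS : ∀ j : Fin r,
      (∑ k, (((Finsupp.single i 1 + d : Fin n →₀ ℕ)) k : ℤ) * v j k)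
        = (∑ k, (d k : ℤ) * v j k) + v j i := by
    intro j
    have h1 : ∀ k : Fin n, (((Finsupp.single i 1 + d : Fin n →₀ ℕ)) k : ℤ) * v j k
        = (if k = i then v j i else 0) + (d k : ℤ) * v j k := by
      intro k
      rw [Finsupp.add_apply, Finsupp.single_apply]
      by_cases h : i = k
      · subst h; rw [if_pos rfl, if_pos rfl]; push_cast; ring
      · rw [if_neg h, if_neg (Ne.symm h)]; push_cast; ring
    rw [Finset.sum_congr rfl fun k _ => h1 k, Finset.sum_add_distrib,
      Finset.sum_ite_eq' Finset.univ, if_pos (Finset.mem_univ _), add_comm]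
  simp only [hS]
  have hSd : ∀ (j : Fin r) (hj : (j : ℕ) < n),
      (∑ k, (d k : ℤ) * v j k) = d ⟨(j : ℕ), hj⟩ := fun j hj => dot_lt hv (⇑d) j hj
  have hvji : ∀ (j : Fin r), (j : ℕ) < n → v j i = if (i : ℕ) = (j : ℕ) then 1 else 0 :=
    fun j hj => hv j hj i
  have hiff : (∀ j : Fin r, -(a j) ≤ (∑ k, ((d k : ℤ)) * v j k) + v j i) ↔
      (∀ j : Fin r, -(if (j : ℕ) < n then 0 else a j + v j i) ≤ ∑ k, ((d k : ℤ)) * v j k) := by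
    constructor <;> intro h j <;> have hj := h j
    · by_cases hjn : (j : ℕ) < n
      · rw [if_pos hjn, neg_zero, hSd j hjn]
        exact Int.natCast_nonneg _
      · rw [if_neg hjn]; linarith
    · by_cases hjn : (j : ℕ) < n
      · rw [ha j hjn, neg_zero, hSd j hjn, hvji j hjn]
        have h2 : (0 : ℤ) ≤ (d ⟨(j : ℕ), hjn⟩ : ℤ) := Int.natCast_nonneg _
        split <;> omega
      · rw [if_neg hjn] at hj; linarith
  by_cases hc : ∀ j : Fin r, -(a j) ≤ (∑ k, ((d k : ℤ)) * v j k) + v j i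
  · rw [if_pos hc, if_pos (hiff.mp hc)]
    set A : ℤ := ∑ j, a j with hA
    have hi'r : (i : ℕ) < r := lt_trans i.2 hnr
    set i' : Fin r := ⟨(i : ℕ), hi'r⟩ with hi'
    have hii' : (⟨((i' : Fin r) : ℕ), i.2⟩ : Fin n) = i := Fin.ext rfl
    have ht0 : ∀ j : Fin r, 0 ≤ (∑ k, ((d k : ℤ)) * v j k) + v j i + a j := by
      intro j; have := hc j; linarith
    have hti' : (∑ k, ((d k : ℤ)) * v i' k) + v i' i + a i' = (d i : ℤ) + 1 := by
      rw [hSd i' i.2, hvji i' i.2, ha i' i.2, if_pos rfl, hii']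
      ring
    have htsum : ∑ j : Fin r, ((∑ k, ((d k : ℤ)) * v j k) + v j i + a j) = A := by
      rw [Finset.sum_add_distrib, Finset.sum_add_distrib, dot_sum hsym, hsym i,
        zero_add, zero_add, hA]
    have hA1 : 1 ≤ A := by
      have h3 : (∑ k, ((d k : ℤ)) * v i' k) + v i' i + a i'
          ≤ ∑ j : Fin r, ((∑ k, ((d k : ℤ)) * v j k) + v j i + a j) :=
        Finset.single_le_sum (fun j _ => ht0 j) (Finset.mem_univ i')
      rw [htsum, hti'] at h3
      have h4 : (0 : ℤ) ≤ (d i : ℤ) := Int.natCast_nonneg _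
      linarith
    have hA' : (∑ j : Fin r, if (j : ℕ) < n then 0 else a j + v j i) = A - 1 := by
      have h1 : ∀ j : Fin r, (if (j : ℕ) < n then 0 else a j + v j i)
          = ((∑ k, ((d k : ℤ)) * v j k) + v j i + a j) - (∑ k, ((d k : ℤ)) * v j k)
            - (if j = i' then 1 else 0) := by
        intro j
        by_cases hjn : (j : ℕ) < n
        · rw [if_pos hjn, ha j hjn, hvji j hjn]
          have : (j = i') ↔ ((i : ℕ) = (j : ℕ)) := by
            rw [Fin.ext_iff]; exact comm
          by_cases h : j = i'
          · rw [if_pos h, if_pos (this.mp h)]; ring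
          · rw [if_neg h, if_neg (fun hh => h (this.mpr hh))]; ring
        · have h5 : j ≠ i' := by
            intro hh; rw [hh] at hjn; exact hjn i.2
          rw [if_neg hjn, if_neg h5]; ring
      rw [Finset.sum_congr rfl fun j _ => h1 j, Finset.sum_sub_distrib,
        Finset.sum_sub_distrib, htsum, dot_sum hsym,
        Finset.sum_ite_eq' Finset.univ, if_pos (Finset.mem_univ _)]
      ring
    have ht'eq : ∀ j ∈ Finset.univ.erase i',
        qqPoch RatFunc.X ((∑ k, ((d k : ℤ)) * v j k)
            + (if (j : ℕ) < n then 0 else a j + v j i)).toNat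
          = qqPoch RatFunc.X ((∑ k, ((d k : ℤ)) * v j k) + v j i + a j).toNat := by
      intro j hj
      have hji : j ≠ i' := (Finset.mem_erase.mp hj).1
      have h6 : (if (j : ℕ) < n then 0 else a j + v j i) = v j i + a j := by
        by_cases hjn : (j : ℕ) < n
        · rw [if_pos hjn, ha j hjn, hvji j hjn,
            if_neg (fun hh : (i : ℕ) = (j : ℕ) => hji (Fin.ext hh.symm))]
          ring
        · rw [if_neg hjn]; ring
      rw [h6, ← add_assoc]
    have hP1 : (∏ j : Fin r, qqPoch RatFunc.X
          ((∑ k, ((d k : ℤ)) * v j k) + v j i + a j).toNat)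
        = qqPoch RatFunc.X (d i + 1) *
          ∏ j ∈ Finset.univ.erase i', qqPoch RatFunc.X
            ((∑ k, ((d k : ℤ)) * v j k) + v j i + a j).toNat := by
      rw [← Finset.mul_prod_erase Finset.univ _ (Finset.mem_univ i'), hti']
      norm_num
    have hP2 : (∏ j : Fin r, qqPoch RatFunc.X
          ((∑ k, ((d k : ℤ)) * v j k) + (if (j : ℕ) < n then 0 else a j + v j i)).toNat)
        = qqPoch RatFunc.X (d i) *
          ∏ j ∈ Finset.univ.erase i', qqPoch RatFunc.X
            ((∑ k, ((d k : ℤ)) * v j k) + v j i + a j).toNat := by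
      rw [← Finset.mul_prod_erase Finset.univ _ (Finset.mem_univ i'),
        Finset.prod_congr rfl ht'eq]
      congr 2
      rw [if_pos i.2, hSd i' i.2, hii']
      simp
    rw [hP1, hP2, hA', hA]
    rw [show (∑ j : Fin r, a j).toNat = ((∑ j : Fin r, a j) - 1).toNat + 1 by omega]
    have h8 : 1 ≤ ∑ j : Fin r, a j := hA1
    have hAz : (RatFunc.X : RatFunc ℚ) ^ (∑ j : Fin r, a j)
        = RatFunc.X ^ ((((∑ j : Fin r, a j) - 1).toNat + 1 : ℕ)) := by
      conv_lhs => rw [show (∑ j : Fin r, a j)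
        = ((((∑ j : Fin r, a j) - 1).toNat + 1 : ℕ) : ℤ) by omega]
      rw [zpow_natCast]
    rw [hAz]
    rw [qqPoch_succ (((∑ j : Fin r, a j) - 1).toNat), qqPoch_succ (d i)]
    have hne1 : (1 - RatFunc.X : RatFunc ℚ) ≠ 0 := by
      have := one_sub_X_pow_ne 0; rwa [pow_one] at this
    have hne2 : (1 - RatFunc.X ^ (d i + 1) : RatFunc ℚ) ≠ 0 := one_sub_X_pow_ne (d i)
    have hne3 : qqPoch RatFunc.X (d i) ≠ 0 := qqPoch_ne_zero _
    have hne4 : (∏ j ∈ Finset.univ.erase i', qqPoch RatFunc.X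
        ((∑ k, ((d k : ℤ)) * v j k) + v j i + a j).toNat) ≠ 0 :=
      Finset.prod_ne_zero_iff.mpr fun j _ => qqPoch_ne_zero _
    field_simp
  · rw [if_neg hc, if_neg (fun h => hc (hiff.mpr h)), mul_zero, mul_zero]
end

section
/- Let n, r be positive integers, v₁,…,v_r ∈ ℤⁿ, and a₁,…,a_r ∈ ℤ such that P = {u ∈ ℝⁿ : ⟨u,v_i⟩ ≥ −a_i for all i} is a nonempty compact polytope whose vertices all lie in ℤⁿ. Set v_Δ = v₁+⋯+v_r, |a| = a₁+⋯+a_r, let c = max_{u∈P} ⟨u,v_Δ⟩ + |a| (a nonnegative integer), and let F = {u ∈ P : ⟨u,v_Δ⟩ + |a| = c}, so F∩ℤⁿ ≠ ∅. For u ∈ P∩ℤⁿ define g_u(q) = ∏_{i=1}^r 1/(q;q)_{⟨u,v_i⟩+a_i} for q ∈ (0,1), and M(u) = (⟨u,v_Δ⟩+|a|)! / ∏_{i=1}^r (⟨u,v_i⟩+a_i)!. Then for every u ∈ P∩ℤⁿ, the limit as q → 1⁻ of g_u(q) / Σ_{u'∈P∩ℤⁿ} g_{u'}(q) exists and equals M(u)/Σ_{u''∈F∩ℤⁿ}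 M(u'') if u ∈ F, and equals 0 if u ∉ F. -/
open Filter

private lemma qfac_tendsto (d : ℕ) :
    Tendsto (fun q : ℝ => (1 - q) ^ d * (∏ k ∈ Finset.range d, (1 - q ^ (k + 1)))⁻¹)
      (nhdsWithin 1 (Set.Ioo (0 : ℝ) 1)) (nhds ((d.factorial : ℝ))⁻¹) := by
  have h1 : Tendsto (fun q : ℝ => ∏ k ∈ Finset.range d, (∑ j ∈ Finset.range (k + 1), q ^ j)⁻¹)
      (nhdsWithin 1 (Set.Ioo (0 : ℝ) 1)) (nhds ((d.factorial : ℝ))⁻¹) := by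
    have h2 : Tendsto (fun q : ℝ => ∏ k ∈ Finset.range d, (∑ j ∈ Finset.range (k + 1), q ^ j)⁻¹)
        (nhds 1) (nhds (∏ k ∈ Finset.range d, ((k : ℝ) + 1)⁻¹)) := by
      apply tendsto_finset_prod
      intro k _
      have hc : Tendsto (fun q : ℝ => ∑ j ∈ Finset.range (k + 1), q ^ j) (nhds 1)
          (nhds ((k : ℝ) + 1)) := by
        have := (continuous_finset_sum (Finset.range (k + 1))
          (fun j _ => (continuous_id.pow j : Continuous fun q : ℝ => q ^ j))).tendsto 1
        simpa using this
      exact hc.inv₀ (by positivity)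
    have hval : ∏ k ∈ Finset.range d, ((k : ℝ) + 1)⁻¹ = ((d.factorial : ℝ))⁻¹ := by
      have hfac : (d.factorial : ℝ) = ∏ k ∈ Finset.range d, ((k : ℝ) + 1) := by
        rw [← Finset.prod_range_add_one_eq_factorial]; push_cast; rfl
      rw [hfac, Finset.prod_inv_distrib]
    rw [hval] at h2
    exact h2.mono_left nhdsWithin_le_nhds
  refine h1.congr' ?_
  filter_upwards [self_mem_nhdsWithin] with q hq
  have h1q : (1 : ℝ) - q ≠ 0 := by
    have := hq.2; intro h; nlinarith
  have hgeom : ∀ k : ℕ, (1 : ℝ) - q ^ (k + 1) =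
      (∑ j ∈ Finset.range (k + 1), q ^ j) * (1 - q) := by
    intro k
    have := geom_sum_mul q (k + 1)
    linarith [this]
  rw [Finset.prod_congr rfl fun k _ => hgeom k, Finset.prod_mul_distrib,
    Finset.prod_const, Finset.card_range, mul_inv, mul_comm
      ((∏ k ∈ Finset.range d, ∑ j ∈ Finset.range (k + 1), q ^ j)⁻¹), ← mul_assoc,
    mul_inv_cancel₀ (pow_ne_zero _ h1q), one_mul, Finset.prod_inv_distrib]

private lemma Glim {r : ℕ} (c : ℕ) (d : Fin r → ℕ) (hD : ∑ i, d i ≤ c) :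
    Tendsto (fun q : ℝ => (1 - q) ^ c * ∏ i, (∏ k ∈ Finset.range (d i), (1 - q ^ (k + 1)))⁻¹)
      (nhdsWithin 1 (Set.Ioo (0 : ℝ) 1))
      (nhds (if ∑ i, d i = c then ∏ i, (((d i).factorial : ℝ))⁻¹ else 0)) := by
  have hpow : Tendsto (fun q : ℝ => (1 - q) ^ (c - ∑ i, d i))
      (nhdsWithin 1 (Set.Ioo (0 : ℝ) 1)) (nhds ((0 : ℝ) ^ (c - ∑ i, d i))) := by
    have hcont : Continuous fun q : ℝ => (1 - q) ^ (c - ∑ i, d i) := by continuity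
    have := hcont.tendsto (1 : ℝ)
    simp only [sub_self] at this
    exact this.mono_left nhdsWithin_le_nhds
  have hprod : Tendsto (fun q : ℝ =>
      ∏ i, ((1 - q) ^ (d i) * (∏ k ∈ Finset.range (d i), (1 - q ^ (k + 1)))⁻¹))
      (nhdsWithin 1 (Set.Ioo (0 : ℝ) 1)) (nhds (∏ i, (((d i).factorial : ℝ))⁻¹)) :=
    tendsto_finset_prod _ fun i _ => qfac_tendsto (d i)
  have key := hpow.mul hprod
  have hfun : ∀ q : ℝ, (1 - q) ^ (c - ∑ i, d i) *
      ∏ i, ((1 - q) ^ (d i) * (∏ k ∈ Finset.range (d i), (1 - q ^ (k + 1)))⁻¹) =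
      (1 - q) ^ c * ∏ i, (∏ k ∈ Finset.range (d i), (1 - q ^ (k + 1)))⁻¹ := by
    intro q
    rw [Finset.prod_mul_distrib, Finset.prod_pow_eq_pow_sum, ← mul_assoc, ← pow_add,
      Nat.sub_add_cancel hD]
  have hval : (0 : ℝ) ^ (c - ∑ i, d i) * ∏ i, (((d i).factorial : ℝ))⁻¹ =
      if ∑ i, d i = c then ∏ i, (((d i).factorial : ℝ))⁻¹ else 0 := by
    split_ifs with h
    · rw [h, Nat.sub_self, pow_zero, one_mul]
    · rw [zero_pow (Nat.sub_ne_zero_of_lt (lt_of_le_of_ne hD h)), zero_mul]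
  rw [← hval]
  exact key.congr hfun

private lemma aux_main {r : ℕ} {ι : Type*} [DecidableEq ι] (S : Finset ι)
    (d : ι → Fin r → ℕ) (c : ℕ)
    (hle : ∀ w ∈ S, ∑ i, d w i ≤ c)
    (hex : ∃ w ∈ S, ∑ i, d w i = c)
    (u : ι) (huS : u ∈ S) :
    Tendsto (fun q : ℝ =>
        (∏ i, (∏ k ∈ Finset.range (d u i), (1 - q ^ (k + 1)))⁻¹) /
          ∑ u' ∈ S, ∏ i, (∏ k ∈ Finset.range (d u' i), (1 - q ^ (k + 1)))⁻¹)
      (nhdsWithin 1 (Set.Ioo (0 : ℝ) 1))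
      (nhds (if ∑ i, d u i = c then
        (Nat.multinomial Finset.univ (d u) : ℝ) /
          ∑ u'' ∈ S.filter (fun w => ∑ i, d w i = c),
            (Nat.multinomial Finset.univ (d u'') : ℝ)
        else 0)) := by
  classical
  set L : ι → ℝ := fun w => if ∑ i, d w i = c then ∏ i, (((d w i).factorial : ℝ))⁻¹ else 0
    with hL
  set T : ℝ := ∑ w ∈ S, L w with hT
  have hTfilt : T = ∑ w ∈ S.filter (fun w => ∑ i, d w i = c),
      ∏ i, (((d w i).factorial : ℝ))⁻¹ := by
    rw [hT, Finset.sum_filter]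
  have hTpos : 0 < T := by
    rw [hTfilt]
    obtain ⟨w₀, hw₀S, hw₀⟩ := hex
    refine Finset.sum_pos (fun w _ => by positivity) ⟨w₀, Finset.mem_filter.2 ⟨hw₀S, hw₀⟩⟩
  have hnum : Tendsto (fun q : ℝ =>
      (1 - q) ^ c * ∏ i, (∏ k ∈ Finset.range (d u i), (1 - q ^ (k + 1)))⁻¹)
      (nhdsWithin 1 (Set.Ioo (0 : ℝ) 1)) (nhds (L u)) := Glim c (d u) (hle u huS)
  have hden : Tendsto (fun q : ℝ =>
      ∑ w ∈ S, (1 - q) ^ c * ∏ i, (∏ k ∈ Finset.range (d w i), (1 - q ^ (k + 1)))⁻¹)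
      (nhdsWithin 1 (Set.Ioo (0 : ℝ) 1)) (nhds T) :=
    tendsto_finset_sum _ fun w hw => Glim c (d w) (hle w hw)
  have hdiv := hnum.div hden (ne_of_gt hTpos)
  have hcongr : Tendsto (fun q : ℝ =>
        (∏ i, (∏ k ∈ Finset.range (d u i), (1 - q ^ (k + 1)))⁻¹) /
          ∑ u' ∈ S, ∏ i, (∏ k ∈ Finset.range (d u' i), (1 - q ^ (k + 1)))⁻¹)
      (nhdsWithin 1 (Set.Ioo (0 : ℝ) 1)) (nhds (L u / T)) := by
    refine hdiv.congr' ?_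
    filter_upwards [self_mem_nhdsWithin] with q hq
    have h1q : (1 - q) ^ c ≠ 0 := pow_ne_zero _ (by have := hq.2; intro h; nlinarith)
    simp only [Pi.div_apply]
    rw [← Finset.mul_sum, mul_div_mul_left _ _ h1q]
  have hfinal : L u / T = if ∑ i, d u i = c then
      (Nat.multinomial Finset.univ (d u) : ℝ) /
        ∑ u'' ∈ S.filter (fun w => ∑ i, d w i = c),
          (Nat.multinomial Finset.univ (d u'') : ℝ)
      else 0 := by
    have hmult : ∀ w : ι, ∑ i, d w i = c →
        (Nat.multinomial Finset.univ (d w) : ℝ) =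
          (c.factorial : ℝ) * ∏ i, (((d w i).factorial : ℝ))⁻¹ := by
      intro w hw
      have hspec := Nat.multinomial_spec Finset.univ (d w)
      rw [hw] at hspec
      have hprodne : (∏ i, (((d w i).factorial : ℝ))) ≠ 0 := by positivity
      have hcast : (∏ i, (((d w i).factorial : ℝ))) * (Nat.multinomial Finset.univ (d w) : ℝ)
          = (c.factorial : ℝ) := by exact_mod_cast hspec
      rw [Finset.prod_inv_distrib, eq_mul_inv_iff_mul_eq₀ hprodne, mul_comm]
      exact hcast
    split_ifs with h
    · have hLu : L u = ∏ i, (((d u i).factorial : ℝ))⁻¹ := by rw [hL]; simp [h]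
      rw [hLu, hmult u h, hTfilt,
        Finset.sum_congr rfl (fun w hw => hmult w (Finset.mem_filter.1 hw).2),
        ← Finset.mul_sum, mul_div_mul_left]
      positivity
    · rw [hL]; simp [h]
  rw [← hfinal]
  exact hcongr

/-- With `P`, `v_Δ`, `|a|`, `c`, `F` as in the context, set
`g_u(q) = ∏_i 1/(q;q)_{⟨u,v_i⟩+a_i}` for lattice points `u ∈ P∩ℤⁿ` (the finite set `S`)
and `M(u) = (⟨u,v_Δ⟩+|a|)!/∏_i (⟨u,v_i⟩+a_i)!`.  Then for every `u ∈ P∩ℤⁿ`, as `q → 1⁻`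
the ratio `g_u(q)/Σ_{u'∈P∩ℤⁿ} g_{u'}(q)` tends to `M(u)/Σ_{u''∈F∩ℤⁿ} M(u'')` if `u ∈ F`,
and to `0` otherwise. -/
theorem stmt8 (n r : ℕ) (hn : 0 < n) (hr : 0 < r)
    (v : Fin r → Fin n → ℤ) (a : Fin r → ℤ)
    (P : Set (Fin n → ℝ))
    (hP : P = {u : Fin n → ℝ | ∀ i, -(a i : ℝ) ≤ ∑ j, u j * v i j})
    (hPne : P.Nonempty) (hPcpt : IsCompact P)
    (hvert : ∀ p ∈ Set.extremePoints ℝ P, ∀ j, ∃ z : ℤ, p j = (z : ℝ))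
    (c : ℕ)
    (hc : IsGreatest ((fun u : Fin n → ℝ => ∑ i, ((∑ j, u j * v i j) + a i)) '' P) (c : ℝ))
    (S : Finset (Fin n → ℤ))
    (hS : ∀ u : Fin n → ℤ, u ∈ S ↔ (fun j => (u j : ℝ)) ∈ P)
    (u : Fin n → ℤ) (hu : (fun j => (u j : ℝ)) ∈ P) :
    Tendsto
      (fun q : ℝ =>
        (∏ i, (∏ k ∈ Finset.range ((∑ j, u j * v i j) + a i).toNat, (1 - q ^ (k + 1)))⁻¹) /
          ∑ u' ∈ S,
            ∏ i, (∏ k ∈ Finset.range ((∑ j, u' j * v i j) + a i).toNat, (1 - q ^ (k + 1)))⁻¹)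
      (nhdsWithin 1 (Set.Ioo (0 : ℝ) 1))
      (nhds
        (if (∑ i, ((∑ j, u j * v i j) + a i)) = (c : ℤ) then
          (Nat.multinomial Finset.univ (fun i => ((∑ j, u j * v i j) + a i).toNat) : ℝ) /
            ∑ u'' ∈ S.filter (fun u'' => (∑ i, ((∑ j, u'' j * v i j) + a i)) = (c : ℤ)),
              (Nat.multinomial Finset.univ (fun i => ((∑ j, u'' j * v i j) + a i).toNat) : ℝ)
        else 0)) := by
  classical
  -- basic cast facts for lattice points of `P`
  have hnn : ∀ w : Fin n → ℤ, (fun j => (w j : ℝ)) ∈ P → ∀ i,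
      0 ≤ (∑ j, w j * v i j) + a i := by
    intro w hw i
    have h := (hP ▸ hw) i
    have hcast : ((∑ j, w j * v i j : ℤ) : ℝ) = ∑ j, (w j : ℝ) * (v i j : ℝ) := by push_cast; rfl
    have : (0 : ℝ) ≤ ((∑ j, w j * v i j) + a i : ℤ) := by push_cast; linarith
    exact_mod_cast this
  have hcastD : ∀ w : Fin n → ℤ, (fun j => (w j : ℝ)) ∈ P →
      ((∑ i, ((∑ j, w j * v i j) + a i).toNat : ℕ) : ℤ) = ∑ i, ((∑ j, w j * v i j) + a i) := by
    intro w hw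
    rw [Nat.cast_sum]
    exact Finset.sum_congr rfl fun i _ => Int.toNat_of_nonneg (hnn w hw i)
  have hle : ∀ w ∈ S, ∑ i, ((∑ j, w j * v i j) + a i).toNat ≤ c := by
    intro w hw
    have hwP := (hS w).1 hw
    have h : ∑ i, ((∑ j, ((w j : ℝ)) * ((v i j : ℝ))) + (a i : ℝ)) ≤ (c : ℝ) :=
      hc.2 ⟨_, hwP, rfl⟩
    have hZ : (∑ i, ((∑ j, w j * v i j) + a i) : ℤ) ≤ (c : ℤ) := by exact_mod_cast h
    have hN := hcastD w hwP
    omega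
  -- existence of a lattice point attaining the maximum
  have hconv : Convex ℝ P := by
    rw [hP]
    have heq : {u : Fin n → ℝ | ∀ i, -(a i : ℝ) ≤ ∑ j, u j * v i j} =
        ⋂ i, {u : Fin n → ℝ | -(a i : ℝ) ≤ ∑ j, u j * v i j} := by
      ext x; simp [Set.mem_iInter]
    rw [heq]
    refine convex_iInter fun i => convex_halfSpace_ge ?_ _
    constructor
    · intro x y; simp [add_mul, Finset.sum_add_distrib]
    · intro t x; simp [Finset.mul_sum, smul_eq_mul, mul_assoc]
  set l : (Fin n → ℝ) →L[ℝ] ℝ :=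
    ∑ i, ∑ j, ((v i j : ℝ)) • (ContinuousLinearMap.proj j : (Fin n → ℝ) →L[ℝ] ℝ) with hl_def
  have hl : ∀ x : Fin n → ℝ, l x = ∑ i, ∑ j, x j * v i j := by
    intro x
    simp [hl_def, ContinuousLinearMap.sum_apply, mul_comm]
  set F' : Set (Fin n → ℝ) := {x ∈ P | ∀ y ∈ P, l y ≤ l x} with hF'_def
  have hexp : IsExposed ℝ P F' := fun _ => ⟨l, rfl⟩
  obtain ⟨x₀, hx₀P, hx₀⟩ := hPcpt.exists_isMaxOn hPne l.continuous.continuousOn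
  have hF'ne : F'.Nonempty := ⟨x₀, hx₀P, fun y hy => hx₀ hy⟩
  have hF'cpt : IsCompact F' := hexp.isCompact hPcpt
  obtain ⟨e, he⟩ := hF'cpt.extremePoints_nonempty hF'ne
  have heP : e ∈ Set.extremePoints ℝ P :=
    (hexp.isExtreme).extremePoints_subset_extremePoints he
  have heF' : e ∈ F' := he.1
  choose z hz using hvert e heP
  have he_eq : (fun j => (z j : ℝ)) = e := funext fun j => (hz j).symm
  have hzP : (fun j => (z j : ℝ)) ∈ P := he_eq ▸ heF'.1
  have hzS : z ∈ S := (hS z).2 hzP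
  -- e attains the max value c
  have hΦe : (∑ i, ((∑ j, e j * v i j) + (a i : ℝ))) = (c : ℝ) := by
    obtain ⟨p, hpP, hpc⟩ := hc.1
    have hpc' : (∑ i, ((∑ j, p j * v i j) + (a i : ℝ))) = (c : ℝ) := hpc
    have h1 : (∑ i, ((∑ j, p j * v i j) + (a i : ℝ))) ≤
        (∑ i, ((∑ j, e j * v i j) + (a i : ℝ))) := by
      have hle' := heF'.2 p hpP
      rw [hl, hl] at hle'
      have hsum : ∀ x : Fin n → ℝ, (∑ i, ((∑ j, x j * v i j) + (a i : ℝ))) =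
          (∑ i, ∑ j, x j * v i j) + ∑ i, (a i : ℝ) := by
        intro x; rw [Finset.sum_add_distrib]
      rw [hsum, hsum]
      linarith
    have h2 : (∑ i, ((∑ j, e j * v i j) + (a i : ℝ))) ≤ (c : ℝ) := hc.2 ⟨e, heF'.1, rfl⟩
    linarith
  have hzc : (∑ i, ((∑ j, z j * v i j) + a i) : ℤ) = (c : ℤ) := by
    have : ((∑ i, ((∑ j, z j * v i j) + a i) : ℤ) : ℝ) = (c : ℝ) := by
      push_cast
      rw [← hΦe, ← he_eq]
    exact_mod_cast this
  have hex : ∃ w ∈ S, ∑ i, ((∑ j, w j * v i j) + a i).toNat = c := by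
    refine ⟨z, hzS, ?_⟩
    have := (hcastD z hzP).trans hzc
    exact_mod_cast this
  -- equivalence of the ℤ-condition and the ℕ-condition on `S`
  have hiff : ∀ w : Fin n → ℤ, w ∈ S →
      ((∑ i, ((∑ j, w j * v i j) + a i)) = (c : ℤ) ↔
        ∑ i, ((∑ j, w j * v i j) + a i).toNat = c) := by
    intro w hw
    rw [← hcastD w ((hS w).1 hw)]
    exact_mod_cast Iff.rfl
  have huS : u ∈ S := (hS u).2 hu
  rw [if_congr (hiff u huS) rfl rfl, Finset.filter_congr (fun w hw => hiff w hw)]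
  exact aux_main S (fun w i => ((∑ j, w j * v i j) + a i).toNat) c hle hex u huS
end

section
/- Let b be a nonnegative integer and q ∈ ℂ with |q| < 1. Then the family indexed by weakly increasing tuples 0 ≤ c₁ ≤ c₂ ≤ ⋯ ≤ c_b of nonnegative integers, with terms q^{c₁+c₂+⋯+c_b}, is (absolutely) summable, and its sum equals ∏_{k=1}^{b} 1/(1 − q^k) = 1/(q;q)_b. -/
open Finset

/-- Factorization of a tsum over a pi type on `Fin n` into a product of tsums. -/
lemma aux_pi (n : ℕ) (f : Fin n → ℕ → ℂ) (hf : ∀ i, Summable fun m => ‖f i m‖) :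
    Summable (fun d : Fin n → ℕ => ‖∏ i, f i (d i)‖) ∧
      ∑' d : Fin n → ℕ, ∏ i, f i (d i) = ∏ i, ∑' m, f i m := by
  induction n with
  | zero =>
    constructor
    · exact .of_finite
    · simp [tsum_fintype]
  | succ n ih =>
    obtain ⟨ihs, ihe⟩ := ih (fun i => f i.succ) (fun i => hf i.succ)
    let e : (ℕ × (Fin n → ℕ)) ≃ (Fin (n + 1) → ℕ) :=
      { toFun := fun p => Fin.cons p.1 p.2
        invFun := fun d => (d 0, fun i => d i.succ)
        left_inv := fun p => by simp
        right_inv := fun d => by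
          funext i
          refine Fin.cases ?_ ?_ i <;> simp }
    have hkey : ∀ p : ℕ × (Fin n → ℕ),
        (∏ i, f i (e p i)) = f 0 p.1 * ∏ i : Fin n, f i.succ (p.2 i) := by
      intro p
      rw [Fin.prod_univ_succ]
      simp [e]
    have hprod : Summable (fun p : ℕ × (Fin n → ℕ) =>
        ‖f 0 p.1 * ∏ i : Fin n, f i.succ (p.2 i)‖) :=
      Summable.mul_norm (f := f 0) (g := fun d : Fin n → ℕ => ∏ i : Fin n, f i.succ (d i))
        (hf 0) ihs
    have hsum : Summable (fun d : Fin (n + 1) → ℕ => ‖∏ i, f i (d i)‖) :=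
      e.summable_iff.mp (hprod.congr fun p => (congrArg norm (hkey p)).symm)
    refine ⟨hsum, ?_⟩
    rw [← e.tsum_eq]
    calc ∑' p : ℕ × (Fin n → ℕ), ∏ i, f i (e p i)
        = ∑' p : ℕ × (Fin n → ℕ), f 0 p.1 * ∏ i : Fin n, f i.succ (p.2 i) :=
          tsum_congr hkey
      _ = (∑' m, f 0 m) * ∑' d : Fin n → ℕ, ∏ i : Fin n, f i.succ (d i) :=
          (tsum_mul_tsum_of_summable_norm (hf 0) ihs).symm
      _ = ∏ i, ∑' m, f i m := by rw [ihe, Fin.prod_univ_succ]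

/-- Partial sums of a tuple. -/
def partialSum (b : ℕ) (d : Fin b → ℕ) : Fin b → ℕ := fun j => ∑ i ∈ Iic j, d i

/-- Successive differences of a tuple. -/
def finDiffs (b : ℕ) (c : Fin b → ℕ) : Fin b → ℕ := fun j =>
  c j - (if h : (j : ℕ) = 0 then 0 else c ⟨(j : ℕ) - 1, by omega⟩)

lemma diffs_partialSum (b : ℕ) (d : Fin b → ℕ) : finDiffs b (partialSum b d) = d := by
  funext j
  rcases j with ⟨k, hk⟩
  by_cases h0 : k = 0
  · subst h0
    have h1 : Iic (⟨0, hk⟩ : Fin b) = {⟨0, hk⟩} := by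
      ext i; simp [Fin.le_def, Fin.ext_iff]
    simp [finDiffs, partialSum, h1]
  · have hlt : k - 1 < b := by omega
    have hIic : Iic (⟨k - 1, hlt⟩ : Fin b) = Iio (⟨k, hk⟩ : Fin b) := by
      ext i; simp [Fin.le_def, Fin.lt_def]; omega
    have hins : Iic (⟨k, hk⟩ : Fin b) = insert ⟨k, hk⟩ (Iio (⟨k, hk⟩ : Fin b)) := by
      ext i; simp [Fin.le_def, Fin.lt_def, Fin.ext_iff]
    simp only [finDiffs, partialSum, h0, dif_neg, hIic, hins, dite_false]
    rw [Finset.sum_insert (by simp)]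
    omega

lemma partialSum_diffs (b : ℕ) (c : Fin b → ℕ) (hc : Monotone c) :
    partialSum b (finDiffs b c) = c := by
  funext j
  rcases j with ⟨k, hk⟩
  induction k with
  | zero =>
    have h1 : Iic (⟨0, hk⟩ : Fin b) = {⟨0, hk⟩} := by
      ext i; simp [Fin.le_def, Fin.ext_iff]
    simp [partialSum, finDiffs, h1]
  | succ k ihk =>
    have hk' : k < b := by omega
    have hins : Iic (⟨k + 1, hk⟩ : Fin b) = insert ⟨k + 1, hk⟩ (Iic (⟨k, hk'⟩ : Fin b)) := by
      ext i; simp [Fin.le_def, Fin.ext_iff]; omega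
    have hnotmem : (⟨k + 1, hk⟩ : Fin b) ∉ Iic (⟨k, hk'⟩ : Fin b) := by
      simp [Fin.le_def]
    have hprev : partialSum b (finDiffs b c) ⟨k, hk'⟩ = c ⟨k, hk'⟩ := ihk hk'
    have hmono : c ⟨k, hk'⟩ ≤ c ⟨k + 1, hk⟩ := hc (by simp [Fin.le_def])
    show ∑ i ∈ Iic (⟨k + 1, hk⟩ : Fin b), finDiffs b c i = c ⟨k + 1, hk⟩
    rw [hins, Finset.sum_insert hnotmem]
    have : ∑ i ∈ Iic (⟨k, hk'⟩ : Fin b), finDiffs b c i = c ⟨k, hk'⟩ := hprev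
    rw [this]
    have hd : finDiffs b c ⟨k + 1, hk⟩ = c ⟨k + 1, hk⟩ - c ⟨k, hk'⟩ := by
      simp [finDiffs]
    rw [hd]
    omega

/-- The equivalence between arbitrary tuples and monotone tuples, via partial sums. -/
def monoEquiv (b : ℕ) : (Fin b → ℕ) ≃ {c : Fin b → ℕ // Monotone c} where
  toFun d := ⟨partialSum b d, fun j j' h =>
    Finset.sum_le_sum_of_subset (Finset.Iic_subset_Iic.2 h)⟩
  invFun c := finDiffs b c.1
  left_inv d := diffs_partialSum b d
  right_inv c := Subtype.ext (partialSum_diffs b c.1 c.2)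

lemma monoEquiv_sum (b : ℕ) (d : Fin b → ℕ) :
    (∑ j, ((monoEquiv b d : {c : Fin b → ℕ // Monotone c}) : Fin b → ℕ) j) =
      ∑ i : Fin b, (b - (i : ℕ)) * d i := by
  show (∑ j : Fin b, ∑ i ∈ Iic j, d i) = ∑ i : Fin b, (b - (i : ℕ)) * d i
  calc (∑ j : Fin b, ∑ i ∈ Iic j, d i)
      = ∑ j : Fin b, ∑ i : Fin b, if i ≤ j then d i else 0 := by
        refine Finset.sum_congr rfl fun j _ => ?_
        rw [← Finset.sum_filter]
        congr 1
        ext i; simp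
    _ = ∑ i : Fin b, ∑ j : Fin b, if i ≤ j then d i else 0 := Finset.sum_comm
    _ = ∑ i : Fin b, (b - (i : ℕ)) * d i := by
        refine Finset.sum_congr rfl fun i _ => ?_
        rw [← Finset.sum_filter, Finset.sum_const]
        have h1 : Finset.filter (fun j => i ≤ j) univ = Ici i := by ext j; simp
        rw [h1, Fin.card_Ici, smul_eq_mul]

/-- Let `b` be a nonnegative integer and `q ∈ ℂ` with `|q| < 1`.
The family indexed by weakly increasing tuples `0 ≤ c₁ ≤ ⋯ ≤ c_b` of nonnegative integers,
with terms `q^{c₁+⋯+c_b}`, is absolutely summable, and its sum equals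
`∏_{k=1}^b 1/(1 − q^k) = 1/(q;q)_b`. -/
theorem stmt10 (b : ℕ) (q : ℂ) (hq : ‖q‖ < 1) :
    Summable (fun c : {c : Fin b → ℕ // Monotone c} => ‖q ^ (∑ j, (c : Fin b → ℕ) j)‖) ∧
      ∑' c : {c : Fin b → ℕ // Monotone c}, q ^ (∑ j, (c : Fin b → ℕ) j) =
        ∏ k ∈ Finset.range b, (1 - q ^ (k + 1))⁻¹ := by
  have hnorm : ∀ i : Fin b, ‖q ^ (b - (i : ℕ))‖ < 1 := by
    intro i
    have h1 : 1 ≤ b - (i : ℕ) := by omega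
    calc ‖q ^ (b - (i : ℕ))‖ = ‖q‖ ^ (b - (i : ℕ)) := norm_pow _ _
      _ ≤ ‖q‖ ^ 1 := pow_le_pow_of_le_one (norm_nonneg q) hq.le h1
      _ < 1 := by simpa using hq
  have hfs : ∀ i : Fin b, Summable fun m => ‖(q ^ (b - (i : ℕ))) ^ m‖ := by
    intro i
    simpa [norm_pow] using summable_geometric_of_lt_one (norm_nonneg _) (hnorm i)
  obtain ⟨hs, he⟩ := aux_pi b (fun i m => (q ^ (b - (i : ℕ))) ^ m) hfs
  have hterm : ∀ d : Fin b → ℕ,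
      q ^ (∑ j, ((monoEquiv b d : {c : Fin b → ℕ // Monotone c}) : Fin b → ℕ) j) =
        ∏ i : Fin b, (q ^ (b - (i : ℕ))) ^ (d i) := by
    intro d
    rw [monoEquiv_sum, ← Finset.prod_pow_eq_pow_sum]
    exact Finset.prod_congr rfl fun i _ => by rw [pow_mul]
  constructor
  · rw [← (monoEquiv b).summable_iff]
    refine hs.congr fun d => ?_
    simp only [Function.comp, hterm d]
  · rw [← (monoEquiv b).tsum_eq]
    calc (∑' d : Fin b → ℕ,
          q ^ (∑ j, ((monoEquiv b d : {c : Fin b → ℕ // Monotone c}) : Fin b → ℕ) j))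
        = ∑' d : Fin b → ℕ, ∏ i : Fin b, (q ^ (b - (i : ℕ))) ^ (d i) := tsum_congr hterm
      _ = ∏ i : Fin b, ∑' m, (q ^ (b - (i : ℕ))) ^ m := he
      _ = ∏ i : Fin b, (1 - q ^ (b - (i : ℕ)))⁻¹ := by
          refine Finset.prod_congr rfl fun i _ => ?_
          exact tsum_geometric_of_norm_lt_one (hnorm i)
      _ = ∏ k ∈ Finset.range b, (1 - q ^ (b - k))⁻¹ :=
          Fin.prod_univ_eq_prod_range (fun k => (1 - q ^ (b - k))⁻¹) b
      _ = ∏ k ∈ Finset.range b, (1 - q ^ (k + 1))⁻¹ := by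
          rw [← Finset.prod_range_reflect (fun k => (1 - q ^ (k + 1))⁻¹) b]
          refine Finset.prod_congr rfl fun k hk => ?_
          rw [Finset.mem_range] at hk
          have hbk : b - k = b - 1 - k + 1 := by omega
          rw [hbk]
end
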